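/- If G is a finite abelian group admitting a complete mapping (a bijection φ: G → G such that x ↦ x·φ(x) is also a bijection), then the product of all elements of G is the identity. -/

import Mathlib

/-- If a finite abelian group admits a complete mapping, the product of all its
elements is the identity. -/
theorem stmt_0 {G : Type*} [CommGroup G] [Fintype G] (φ : G ≃ G)
    (h : Function.Bijective fun x : G => x * φ x) :
    ∏ x : G, x = 1 := by
  have h1 : ∏ x : G, (x * φ x) = ∏ x : G, x :=
    (Equiv.ofBijective _ h).prod_comp id
  have h2 : ∏ x : G, (x * φ x) = (∏ x : G, x) * (∏ x : G, x) := by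
    rw [Finset.prod_mul_distrib]; exact congrArg _ (φ.prod_comp id)
  have := h1.symm.trans h2
  exact (mul_eq_left.mp this.symm)
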